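/- If K > 0, then sup_{t∈[0,T]} Λ(t,T) = (1+β)² - (β + β²/2)·√(1 + (β/(2+β))(1 - e^{-KT}))·e^{-KT/2} - (β + β² - (β²/2)e^{-KT})·e^{-KT/2}/√(1 + (β/(2+β))(1 - e^{-KT})), where Λ(t,T) = 1 + β(1 - e^{-K(T-t)}) + (β+β²)(1 - e^{-Kt}) + (β²/2)(e^{-K(t+T)} - e^{-K(T-t)}). -/

import Mathlib

open Real

set_option maxHeartbeats 1000000 in
theorem lambda_sup_K_pos (β K T : ℝ) (hK : 0 < K) (hβ : 0 < β) (hT : 0 < T) :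
    IsGreatest ((fun t : ℝ => 1 + β * (1 - exp (-K * (T - t))) + (β + β ^ 2) * (1 - exp (-K * t))
        + (β ^ 2 / 2) * (exp (-K * (t + T)) - exp (-K * (T - t)))) '' Set.Icc 0 T)
      ((1 + β) ^ 2
        - (β + β ^ 2 / 2) * Real.sqrt (1 + (β / (2 + β)) * (1 - exp (-K * T))) * exp (-K * T / 2)
        - (β + β ^ 2 - (β ^ 2 / 2) * exp (-K * T)) * exp (-K * T / 2)
            / Real.sqrt (1 + (β / (2 + β)) * (1 - exp (-K * T)))) := by
  have hβ2 : (0:ℝ) < 2 + β := by linarith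
  set a := exp (-K * T) with ha_def
  have ha_pos : 0 < a := exp_pos _
  have ha1 : a < 1 := by
    rw [ha_def, ← Real.exp_zero]
    exact Real.exp_lt_exp.mpr (by nlinarith)
  set r := exp (-K * T / 2) with hr_def
  have hr_pos : 0 < r := exp_pos _
  have h1 : a = r ^ 2 := by
    rw [ha_def, hr_def, sq, ← Real.exp_add]
    congr 1; ring
  have hinner_pos : (0:ℝ) < 1 + (β / (2 + β)) * (1 - a) := by
    have : 0 ≤ β / (2 + β) := by positivity
    nlinarith
  set s := Real.sqrt (1 + (β / (2 + β)) * (1 - a)) with hs_def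
  have hs_pos : 0 < s := Real.sqrt_pos.mpr hinner_pos
  have hs2 : s ^ 2 = 1 + (β / (2 + β)) * (1 - a) := Real.sq_sqrt hinner_pos.le
  have hQ : β + β ^ 2 - (β ^ 2 / 2) * a = (β + β ^ 2 / 2) * s ^ 2 := by
    rw [hs2]; field_simp; ring
  -- the witness point
  set t₀ := T / 2 + Real.log s / K with ht0_def
  have hexp_t0 : exp (-K * t₀) = r / s := by
    have h : -K * t₀ = -K * T / 2 + (-Real.log s) := by
      rw [ht0_def]; field_simp; ring
    rw [h, Real.exp_add, Real.exp_neg, Real.exp_log hs_pos, ← hr_def, div_eq_mul_inv]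
  have hs_ge1 : 1 ≤ s := by
    have h0 : 0 ≤ β / (2 + β) := by positivity
    have h := Real.sqrt_le_sqrt (show (1:ℝ) ≤ 1 + β / (2 + β) * (1 - a) by nlinarith)
    rwa [Real.sqrt_one] at h
  have ht0_mem : t₀ ∈ Set.Icc (0:ℝ) T := by
    constructor
    · have hlog : 0 ≤ Real.log s := Real.log_nonneg hs_ge1
      have : 0 ≤ Real.log s / K := by positivity
      rw [ht0_def]; linarith
    · -- need log s ≤ K*T/2, i.e. s ≤ exp (K*T/2)
      have hsle : s ≤ exp (K * T / 2) := by
        have h2 : 1 + (β / (2 + β)) * (1 - a) ≤ (exp (K * T / 2)) ^ 2 := by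
          have he : (exp (K * T / 2)) ^ 2 = 1 / a := by
            rw [ha_def, sq, ← Real.exp_add, eq_div_iff (exp_pos _).ne', ← Real.exp_add]
            norm_num
          rw [he]
          rw [div_mul_eq_mul_div, ← sub_nonneg]
          have key : 1 / a - (1 + β * (1 - a) / (2 + β)) = (1 - a) * (2 + β - a * β) / (a * (2 + β)) := by
            field_simp; ring
          rw [key]
          apply div_nonneg
          · exact mul_nonneg (by nlinarith) (by nlinarith)
          · positivity
        calc s = Real.sqrt (1 + (β / (2 + β)) * (1 - a)) := hs_def
          _ ≤ Real.sqrt ((exp (K * T / 2)) ^ 2) := Real.sqrt_le_sqrt h2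
          _ = exp (K * T / 2) := Real.sqrt_sq (exp_pos _).le
      have hlog : Real.log s ≤ K * T / 2 := by
        calc Real.log s ≤ Real.log (exp (K * T / 2)) := Real.log_le_log hs_pos hsle
          _ = K * T / 2 := Real.log_exp _
      have : Real.log s / K ≤ T / 2 := by
        rw [div_le_iff₀ hK]; linarith [hlog]
      rw [ht0_def]; linarith
  clear_value a r s t₀
  constructor
  · refine ⟨t₀, ht0_mem, ?_⟩
    have hA : exp (-K * (T - t₀)) = r * s := by
      have h : -K * (T - t₀) = -K * T - (-K * t₀) := by ring
      rw [h, Real.exp_sub, hexp_t0, ← ha_def, h1]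
      field_simp
    have hB : exp (-K * (t₀ + T)) = r ^ 2 * (r / s) := by
      have h : -K * (t₀ + T) = -K * t₀ + -K * T := by ring
      rw [h, Real.exp_add, hexp_t0, ← ha_def, h1]; ring
    simp only
    rw [hA, hB, hexp_t0, h1]
    ring
  · rintro x ⟨t, ht, rfl⟩
    simp only
    set u := exp (-K * t) with hu_def
    have hu_pos : 0 < u := exp_pos _
    clear_value u
    have hA : exp (-K * (T - t)) = r ^ 2 / u := by
      have h : -K * (T - t) = -K * T - (-K * t) := by ring
      rw [h, Real.exp_sub, ← hu_def, ← ha_def, h1]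
    have hB : exp (-K * (t + T)) = r ^ 2 * u := by
      have h : -K * (t + T) = -K * t + -K * T := by ring
      rw [h, Real.exp_add, ← hu_def, ← ha_def, h1]; ring
    have hQ' : β + β ^ 2 - β ^ 2 / 2 * r ^ 2 = (β + β ^ 2 / 2) * s ^ 2 := by
      have := hQ; rw [h1] at this; linarith [this]
    have hA0 : (0:ℝ) ≤ β + β ^ 2 / 2 := by nlinarith
    rw [hA, hB, h1, hQ']
    have hss : (β + β ^ 2 / 2) * s ^ 2 * r / s = (β + β ^ 2 / 2) * s * r := by
      field_simp
    rw [hss]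
    have hL : 1 + β * (1 - r ^ 2 / u) + (β + β ^ 2) * (1 - u)
        + β ^ 2 / 2 * (r ^ 2 * u - r ^ 2 / u)
        = (1 + β) ^ 2 - (β + β ^ 2 / 2) * r ^ 2 / u - (β + β ^ 2 / 2) * s ^ 2 * u := by
      linear_combination (-u) * hQ'
    rw [hL]
    have hcancel : r ^ 2 / u * u = r ^ 2 := div_mul_cancel₀ _ hu_pos.ne'
    have hkey : ((β + β ^ 2 / 2) * r ^ 2 / u + (β + β ^ 2 / 2) * s ^ 2 * u
        - 2 * ((β + β ^ 2 / 2) * s * r)) * u = (β + β ^ 2 / 2) * (r - s * u) ^ 2 := by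
      linear_combination (β + β ^ 2 / 2) * hcancel
    have h0 : 0 ≤ ((β + β ^ 2 / 2) * r ^ 2 / u + (β + β ^ 2 / 2) * s ^ 2 * u
        - 2 * ((β + β ^ 2 / 2) * s * r)) * u := hkey ▸ mul_nonneg hA0 (sq_nonneg _)
    have h2 : (0:ℝ) ≤ (β + β ^ 2 / 2) * r ^ 2 / u + (β + β ^ 2 / 2) * s ^ 2 * u
        - 2 * ((β + β ^ 2 / 2) * s * r) :=
      le_of_mul_le_mul_right (by linarith : (0:ℝ) * u ≤ ((β + β ^ 2 / 2) * r ^ 2 / u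
        + (β + β ^ 2 / 2) * s ^ 2 * u - 2 * ((β + β ^ 2 / 2) * s * r)) * u) hu_pos
    linarith
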